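/- Let M be a countable structure satisfying Hypothesis (H) with no algebraicity, and let Aut°(E_M) be the set of automorphisms of the orbital structure E_M which preserve each equivalence class of each orbital equivalence relation Eₙ. Then: (1) Aut°(E_M) = Aut(M); (2) Aut°(E_M) is a normal subgroup of Aut(E_M); (3) the bijection α ↦ f_α between topological automorphisms of Aut(M) and automorphisms of E^ex_M(1) ≅ E_M sends Inn(Aut(M)) onto Aut°(E_M); and (4) Out(Aut(M)) ≅ Aut(E_M)/Aut°(E_M), where Out denotes the quotient of the group of topological automorphisms of Aut(M) by the inner automorphisms. -/

import Mathlib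

open FirstOrder

namespace Paper

variable (L : FirstOrder.Language) (M : Type*) [L.Structure M]

/-- The group of automorphisms of a first-order structure, with composition. -/
instance autGroup : Group (M ≃[L] M) where
  one := FirstOrder.Language.Equiv.refl L M
  mul f g := f.comp g
  inv := FirstOrder.Language.Equiv.symm
  mul_assoc _ _ _ := rfl
  one_mul f := FirstOrder.Language.Equiv.ext fun a => by
    show (FirstOrder.Language.Equiv.refl L M).comp f a = f a; simp
  mul_one f := FirstOrder.Language.Equiv.ext fun a => by
    show f.comp (FirstOrder.Language.Equiv.refl L M) a = f a; simp
  inv_mul_cancel f := FirstOrder.Language.Equiv.ext fun a => by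
    show f.symm.comp f a = FirstOrder.Language.Equiv.refl L M a; simp

@[simp] theorem aut_one_apply (a : M) : (1 : M ≃[L] M) a = a := by
  show FirstOrder.Language.Equiv.refl L M a = a; simp
@[simp] theorem aut_mul_apply (f g : M ≃[L] M) (a : M) : (f * g) a = f (g a) := rfl
@[simp] theorem aut_inv_apply (f : M ≃[L] M) (a : M) : f⁻¹ a = f.symm a := rfl
@[simp] theorem aut_coe_mul (f g : M ≃[L] M) : ⇑(f * g) = ⇑f ∘ ⇑g := rfl

/-- The natural action of the automorphism group on the structure. -/
instance autAction : MulAction (M ≃[L] M) M where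
  smul f a := f a
  one_smul _ := rfl
  mul_smul _ _ _ := rfl

@[simp] theorem aut_smul_def (f : M ≃[L] M) (a : M) : f • a = f a := rfl

/-- The topology of pointwise convergence on the automorphism group (the domain
being regarded as discrete). -/
instance autTopology : TopologicalSpace (M ≃[L] M) :=
  letI : TopologicalSpace M := ⊥
  TopologicalSpace.induced (fun g => (g : M → M)) Pi.topologicalSpace

/-- The pointwise stabilizer `G_(A)` of a set `A ⊆ M` in `Aut(M)`. -/
def pstab (A : Set M) : Subgroup (M ≃[L] M) where
  carrier := {g | ∀ a ∈ A, g a = a}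
  one_mem' := fun _ _ => rfl
  mul_mem' := by
    intro f g hf hg a ha
    simp only [Set.mem_setOf_eq] at *
    rw [aut_mul_apply, hg a ha, hf a ha]
  inv_mem' := by
    intro f hf a ha
    simp only [Set.mem_setOf_eq] at *
    rw [aut_inv_apply]
    conv_lhs => rw [← hf a ha]
    exact f.symm_apply_apply a

/-- The setwise stabilizer `G_{A}` of a set `A ⊆ M` in `Aut(M)`. -/
def sstab (A : Set M) : Subgroup (M ≃[L] M) where
  carrier := {g | g '' A = A}
  one_mem' := by
    simp only [Set.mem_setOf_eq]
    ext a; simp [Set.mem_image]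
  mul_mem' := by
    intro f g hf hg
    simp only [Set.mem_setOf_eq] at *
    rw [aut_coe_mul, Set.image_comp, hg, hf]
  inv_mem' := by
    intro f hf
    simp only [Set.mem_setOf_eq] at *
    conv_lhs => rw [← hf]
    rw [Set.image_image]
    ext a; constructor
    · rintro ⟨x, hx, rfl⟩
      simpa [f.symm_apply_apply] using hx
    · intro ha
      exact ⟨a, ha, f.symm_apply_apply a⟩

/-- The Galois-algebraic closure of `A ⊆ M`: the set of elements with finite orbit
under the pointwise stabilizer of `A`. -/
def aclg (A : Set M) : Set M :=
  {b | (MulAction.orbit (pstab L M A) b).Finite}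

/-- The Galois-definable closure of the empty set: elements fixed by every automorphism. -/
def dclg0 : Set M := {b | ∀ g : M ≃[L] M, g b = b}

/-- `p : K ≃ K'` is an isomorphism between the induced substructures on `K` and `K'`. -/
def IsPartialIso (K K' : Set M) (p : K ≃ K') : Prop :=
  (∀ {n : ℕ} (f : L.Functions n) (x : Fin n → K),
      ∃ h : FirstOrder.Language.Structure.funMap f (fun i => (x i : M)) ∈ K,
        (p ⟨FirstOrder.Language.Structure.funMap f (fun i => (x i : M)), h⟩ : M) =
          FirstOrder.Language.Structure.funMap f (fun i => (p (x i) : M))) ∧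
  (∀ {n : ℕ} (r : L.Relations n) (x : Fin n → K),
      FirstOrder.Language.Structure.RelMap r (fun i => (x i : M)) ↔
        FirstOrder.Language.Structure.RelMap r (fun i => (p (x i) : M)))

/-- `A(M)`: the collection of Galois-algebraic closures of finite subsets of `M`. -/
def AA : Set (Set M) := {K | ∃ A : Set M, A.Finite ∧ K = aclg L M A}

/-- Hypothesis (H). -/
structure HypH : Prop where
  countable : Countable M
  locallyFinite : ∀ A : Set M, A.Finite → (aclg L M A).Finite
  extendsIso : ∀ (K K' : Set M), K.Finite → K'.Finite →
    aclg L M K = K → aclg L M K' = K' → ∀ p : K ≃ K', IsPartialIso L M K K' p →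
      ∃ g : M ≃[L] M, ∀ a : K, g a = (p a : M)
  openSandwich : ∀ H : Subgroup (M ≃[L] M), IsOpen (H : Set (M ≃[L] M)) →
    ∃! K : Set M, K.Finite ∧ aclg L M K = K ∧ pstab L M K ≤ H ∧ H ≤ sstab L M K


/-- Generalized pointwise stabilizer `G_(K,L)`. -/
def genStab (K : Set M) (Lsub : Subgroup (Equiv.Perm K)) : Subgroup (M ≃[L] M) where
  carrier := {f | ∃ p ∈ Lsub, ∀ a : K, f a = (p a : M)}
  one_mem' := ⟨1, Lsub.one_mem, fun a => by simp⟩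
  mul_mem' := by
    rintro f g ⟨p, hp, hfp⟩ ⟨q, hq, hgq⟩
    refine ⟨p * q, Lsub.mul_mem hp hq, fun a => ?_⟩
    rw [aut_mul_apply, hgq a, hfp (q a)]
    rfl
  inv_mem' := by
    rintro f ⟨p, hp, hfp⟩
    refine ⟨p⁻¹, Lsub.inv_mem hp, fun a => ?_⟩
    have h1 : f ((p⁻¹ a : K) : M) = ((p (p⁻¹ a) : K) : M) := hfp _
    rw [← Equiv.Perm.mul_apply, mul_inv_cancel, Equiv.Perm.one_apply] at h1
    rw [aut_inv_apply, ← h1, FirstOrder.Language.Equiv.symm_apply_apply]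

/-- `GS(M)`: the collection of generalized pointwise stabilizers. -/
def GS : Set (Subgroup (M ≃[L] M)) :=
  {H | ∃ K ∈ AA L M, ∃ Lsub : Subgroup (Equiv.Perm K),
    (∀ p ∈ Lsub, IsPartialIso L M K K (p : K ≃ K)) ∧ H = genStab L M K Lsub}

/-- `PS(M)`: the collection of pointwise stabilizers of members of `A(M)`. -/
def PS : Set (Subgroup (M ≃[L] M)) := {H | ∃ K ∈ AA L M, H = pstab L M K}

/-- The lattice `A₊(M)`. -/
def Aplus : Set (Set M) := AA L M ∪ {dclg0 L M}

/-- Covering relation in `S`. -/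
def hasseCovers {α : Type*} (S : Set (Set α)) (A B : Set α) : Prop :=
  A ∈ S ∧ B ∈ S ∧ A ⊂ B ∧ ¬∃ C ∈ S, A ⊂ C ∧ C ⊂ B

/-- Adjacency in the Hasse diagram of `S`. -/
def hasseAdj {α : Type*} (S : Set (Set α)) (A B : Set α) : Prop :=
  hasseCovers S A B ∨ hasseCovers S B A

/-- `A_k(M)`: members of `A(M)` distinct from `dcl(∅)` at distance `≤ k` from the bottom
of the lattice `A₊(M)` in its Hasse diagram. -/
def Ak (k : ℕ) : Set (Set M) :=
  {K | K ∈ AA L M ∧ K ≠ dclg0 L M ∧ ∃ (j : ℕ) (c : Fin (j + 1) → Set M), j ≤ k ∧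
    c 0 = dclg0 L M ∧ c (Fin.last j) = K ∧
    ∀ i : Fin j, hasseAdj (Aplus L M) (c i.castSucc) (c i.succ)}

/-- `A_k(M)` for `k ≤ ω`, with `A_ω(M) = A(M)`. -/
def AkE (k : ℕ∞) : Set (Set M) :=
  match k with
  | ⊤ => AA L M
  | (k : ℕ) => Ak L M k

/-- `k_M`: the supremum of lengths of strict chains of Galois-algebraic closures of
singletons. -/
noncomputable def kM : ℕ∞ :=
  ⨆ k ∈ {k : ℕ | ∃ a : Fin k → M, ∀ i j : Fin k, i < j → aclg L M {a i} ⊂ aclg L M {a j}},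
    (k : ℕ∞)

/-- The domain of the expanded structure `E^ex_M(k)`: triples `(K, p, K')` with
`K, K' ∈ A_k(M)` and `p : K ≅ K'`. -/
structure ExTriple (k : ℕ∞) where
  K : Set M
  K' : Set M
  hK : K ∈ AkE L M k
  hK' : K' ∈ AkE L M k
  p : K ≃ K'
  iso : IsPartialIso L M K K' p

/-- The unary predicate of `E^ex_M(k)` holding of the identity triples. -/
def IsIdTriple {k : ℕ∞} (t : ExTriple L M k) : Prop :=
  t.K = t.K' ∧ ∀ a : t.K, (t.p a : M) = (a : M)

/-- The `n`-ary relation `E_n` of `E^ex_M(k)`. -/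
def ERel {k : ℕ∞} {n : ℕ} (x : Fin n → ExTriple L M k) : Prop :=
  ∃ g : M ≃[L] M, ∀ (i : Fin n) (a : (x i).K), g a = ((x i).p a : M)

/-- The binary relation `Dom` of `E^ex_M(k)`. -/
def DomRel {k : ℕ∞} (t s : ExTriple L M k) : Prop := IsIdTriple L M s ∧ s.K = t.K

/-- The binary relation `Cod` of `E^ex_M(k)`. -/
def CodRel {k : ℕ∞} (t s : ExTriple L M k) : Prop := IsIdTriple L M s ∧ s.K = t.K'

variable {L M}

/-- A bijection between the domains of `E^ex_M(k)` and `E^ex_N(k)` is an isomorphism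
if it preserves the identity-triple predicate, all the relations `E_n`, `Dom` and `Cod`. -/
def IsExIso {L' : FirstOrder.Language} {N : Type*} [L'.Structure N] {k : ℕ∞}
    (F : ExTriple L M k ≃ ExTriple L' N k) : Prop :=
  (∀ t, IsIdTriple L M t ↔ IsIdTriple L' N (F t)) ∧
  (∀ (n : ℕ) (x : Fin n → ExTriple L M k), ERel L M x ↔ ERel L' N (F ∘ x)) ∧
  (∀ t s, DomRel L M t s ↔ DomRel L' N (F t) (F s)) ∧
  (∀ t s, CodRel L M t s ↔ CodRel L' N (F t) (F s))

variable (L M)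

/-- The automorphism group of the expanded structure `E^ex_M(k)`. -/
def exAut (k : ℕ∞) : Subgroup (Equiv.Perm (ExTriple L M k)) where
  carrier := {σ | IsExIso (σ : ExTriple L M k ≃ ExTriple L M k)}
  one_mem' := by
    refine ⟨fun t => ?_, fun n x => ?_, fun t s => ?_, fun t s => ?_⟩ <;>
      simp [Equiv.Perm.coe_one, Function.comp_def]
  mul_mem' := by
    rintro σ τ ⟨hσ1, hσ2, hσ3, hσ4⟩ ⟨hτ1, hτ2, hτ3, hτ4⟩
    refine ⟨fun t => ?_, fun n x => ?_, fun t s => ?_, fun t s => ?_⟩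
    · exact (hτ1 t).trans (hσ1 (τ t))
    · exact (hτ2 n x).trans (hσ2 n (τ ∘ x))
    · exact (hτ3 t s).trans (hσ3 (τ t) (τ s))
    · exact (hτ4 t s).trans (hσ4 (τ t) (τ s))
  inv_mem' := by
    rintro σ ⟨hσ1, hσ2, hσ3, hσ4⟩
    refine ⟨fun t => ?_, fun n x => ?_, fun t s => ?_, fun t s => ?_⟩
    · have := hσ1 (σ⁻¹ t); simpa using this.symm
    · have := hσ2 n (⇑(σ⁻¹) ∘ x)
      have hx : ⇑σ ∘ ⇑(σ⁻¹) ∘ x = x := by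
        funext i; simp
      rw [hx] at this
      exact this.symm
    · have := hσ3 (σ⁻¹ t) (σ⁻¹ s); simpa using this.symm
    · have := hσ4 (σ⁻¹ t) (σ⁻¹ s); simpa using this.symm

/-- The subgroup of topological automorphisms of a topological group. -/
def topMulAut (G : Type*) [Group G] [TopologicalSpace G] : Subgroup (MulAut G) where
  carrier := {α | Continuous (α : G → G) ∧ Continuous (α.symm : G → G)}
  one_mem' := ⟨continuous_id, continuous_id⟩
  mul_mem' := by
    rintro α β ⟨hα1, hα2⟩ ⟨hβ1, hβ2⟩
    exact ⟨hα1.comp hβ1, hβ2.comp hα2⟩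
  inv_mem' := by
    rintro α ⟨h1, h2⟩
    exact ⟨h2, h1⟩

/-- A group isomorphism between topological groups which is a homeomorphism. -/
def IsTopIso {G H : Type*} [Group G] [Group H] [TopologicalSpace G] [TopologicalSpace H]
    (e : G ≃* H) : Prop :=
  Continuous (e : G → H) ∧ Continuous (e.symm : H → G)

/-- The natural homomorphism from `Aut(M)` to the symmetric group on `M`. -/
def toPerm : (M ≃[L] M) →* Equiv.Perm M where
  toFun g := g.toEquiv
  map_one' := rfl
  map_mul' f g := Equiv.ext fun _ => rfl

/-- The orbit equivalence relation on `n`-tuples. -/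
def orbRel (n : ℕ) (x y : Fin n → M) : Prop := ∃ g : M ≃[L] M, ∀ i, g (x i) = y i

/-- The automorphism group of the orbital structure `E_M`: permutations of `M`
preserving each orbit equivalence relation. -/
def autOrbital : Subgroup (Equiv.Perm M) where
  carrier := {f | ∀ (n : ℕ) (x y : Fin n → M),
    orbRel L M n x y ↔ orbRel L M n (f ∘ x) (f ∘ y)}
  one_mem' := by intro n x y; simp [Equiv.Perm.coe_one]
  mul_mem' := by
    intro f g hf hg n x y
    exact (hg n x y).trans (hf n (g ∘ x) (g ∘ y))
  inv_mem' := by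
    intro f hf n x y
    have := hf n (⇑(f⁻¹) ∘ x) (⇑(f⁻¹) ∘ y)
    have hx : ⇑f ∘ ⇑(f⁻¹) ∘ x = x := by funext i; simp
    have hy : ⇑f ∘ ⇑(f⁻¹) ∘ y = y := by funext i; simp
    rw [hx, hy] at this
    exact this.symm

/-- `Aut°(E_M)`: automorphisms of the orbital structure preserving each orbit
equivalence class. -/
def autOrbitalFix : Subgroup (Equiv.Perm M) where
  carrier := {f | f ∈ autOrbital L M ∧ ∀ (n : ℕ) (x : Fin n → M), orbRel L M n x (f ∘ x)}
  one_mem' := ⟨(autOrbital L M).one_mem, fun n x => ⟨1, fun i => by simp [Equiv.Perm.coe_one]⟩⟩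
  mul_mem' := by
    rintro f g ⟨hf, hf2⟩ ⟨hg, hg2⟩
    refine ⟨(autOrbital L M).mul_mem hf hg, fun n x => ?_⟩
    obtain ⟨a, ha⟩ := hg2 n x
    obtain ⟨b, hb⟩ := hf2 n (g ∘ x)
    exact ⟨b * a, fun i => by rw [aut_mul_apply, ha i, hb i]; rfl⟩
  inv_mem' := by
    rintro f ⟨hf, hf2⟩
    refine ⟨(autOrbital L M).inv_mem hf, fun n x => ?_⟩
    obtain ⟨a, ha⟩ := hf2 n (⇑(f⁻¹) ∘ x)
    refine ⟨a⁻¹, fun i => ?_⟩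
    have hi := ha i
    simp only [Function.comp_apply, ← Equiv.Perm.mul_apply, mul_inv_cancel, Equiv.Perm.one_apply] at hi
    rw [← hi, aut_inv_apply, FirstOrder.Language.Equiv.symm_apply_apply]
    rfl

/-- A homogeneous structure: isomorphisms between finite substructures extend to
automorphisms. -/
def Homogeneous : Prop :=
  ∀ (K K' : Set M), K.Finite → K'.Finite → ∀ p : K ≃ K',
    IsPartialIso L M K K' p → ∃ g : M ≃[L] M, ∀ a : K, g a = (p a : M)

/-- Weak elimination of imaginaries, phrased group-theoretically: every open subgroup is
sandwiched between the pointwise and setwise stabilizers of a unique smallest finite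
Galois-algebraically closed set. -/
def HasWEI : Prop :=
  ∀ H : Subgroup (M ≃[L] M), IsOpen (H : Set (M ≃[L] M)) →
    ∃ K : Set M, (K.Finite ∧ aclg L M K = K ∧ pstab L M K ≤ H ∧ H ≤ sstab L M K) ∧
      ∀ K' : Set M, (K'.Finite ∧ aclg L M K' = K' ∧ pstab L M K' ≤ H ∧ H ≤ sstab L M K') →
        K ⊆ K'

/-- No algebraicity: every finite set is Galois-algebraically closed. -/
def NoAlgebraicity : Prop := ∀ A : Set M, A.Finite → aclg L M A = A

/-- The small index property: every subgroup of index `< 2^ℵ₀` is open. -/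
def SIP : Prop :=
  ∀ H : Subgroup (M ≃[L] M), Cardinal.mk ((M ≃[L] M) ⧸ H) < Cardinal.continuum →
    IsOpen (H : Set (M ≃[L] M))

/-- An oligomorphic action: finitely many orbits on `n`-tuples for every `n`. -/
def Oligo (G : Type*) [Group G] (X : Type*) [MulAction G X] : Prop :=
  ∀ n : ℕ, Finite (MulAction.orbitRel.Quotient G (Fin n → X))

end Paper

namespace Paper

/-- ω-categoricity: `M` is, up to isomorphism, the unique countable model of its complete
first-order theory. -/
def IsOmegaCategorical (L : FirstOrder.Language) (M : Type w) [L.Structure M] : Prop :=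
  Countable M ∧ ∀ (N : Type w) (iN : L.Structure N), Countable N → Nonempty N →
    (@FirstOrder.Language.Theory.Model L N iN (L.completeTheory M)) →
      Nonempty (@FirstOrder.Language.Equiv L N M iN _)


section Statement19Aux

variable {L : FirstOrder.Language} {M : Type*} [L.Structure M]

lemma mem_pstab {A : Set M} {g : M ≃[L] M} : g ∈ pstab L M A ↔ ∀ a ∈ A, g a = a := Iff.rfl

lemma mem_sstab {A : Set M} {g : M ≃[L] M} : g ∈ sstab L M A ↔ (⇑g) '' A = A := Iff.rfl

lemma mem_autOrbital {f : Equiv.Perm M} : f ∈ autOrbital L M ↔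
    ∀ (n : ℕ) (x y : Fin n → M), orbRel L M n x y ↔ orbRel L M n (⇑f ∘ x) (⇑f ∘ y) := Iff.rfl

lemma mem_autOrbitalFix {f : Equiv.Perm M} : f ∈ autOrbitalFix L M ↔
    f ∈ autOrbital L M ∧ ∀ (n : ℕ) (x : Fin n → M), orbRel L M n x (⇑f ∘ x) := Iff.rfl

lemma toPerm_injective : Function.Injective (toPerm L M) := by
  intro f g hfg
  exact FirstOrder.Language.Equiv.ext fun a => congrArg (fun p : Equiv.Perm M => p a) hfg

lemma pstab_le_sstab (A : Set M) : pstab L M A ≤ sstab L M A := by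
  intro g hg
  refine mem_sstab.2 (Set.ext fun y => ⟨?_, fun hy => ⟨y, hy, hg y hy⟩⟩)
  rintro ⟨x, hx, rfl⟩
  rw [hg x hx]; exact hx

lemma pstab_empty : pstab L M (∅ : Set M) = ⊤ := by
  refine eq_top_iff.2 fun g _ => ?_
  exact fun a ha => absurd ha (Set.notMem_empty a)

lemma sstab_singleton (a : M) : sstab L M {a} = pstab L M {a} := by
  apply le_antisymm
  · intro g hg c hc
    rw [Set.mem_singleton_iff] at hc; subst hc
    have h1 : g c ∈ (⇑g) '' {c} := ⟨c, rfl, rfl⟩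
    rw [mem_sstab.1 hg] at h1
    exact h1
  · exact pstab_le_sstab _

lemma mem_aclg_of_orbit_subset {A C : Set M} {b : M} (hC : C.Finite)
    (h : ∀ g : M ≃[L] M, g ∈ pstab L M A → g b ∈ C) : b ∈ aclg L M A := by
  show (MulAction.orbit (pstab L M A) b).Finite
  refine hC.subset ?_
  rintro y ⟨⟨g, hg⟩, rfl⟩
  exact h g hg

lemma subset_of_sandwich (hnoalg : NoAlgebraicity L M) {A K : Set M} (hA : A.Finite)
    (hK : K.Finite) {H : Subgroup (M ≃[L] M)} (h1 : pstab L M A ≤ H)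
    (h2 : H ≤ sstab L M K) : K ⊆ A := by
  intro k hk
  have hmem : k ∈ aclg L M A := by
    refine mem_aclg_of_orbit_subset hK fun g hg => ?_
    have hs := mem_sstab.1 (h2 (h1 hg))
    rw [← hs]; exact ⟨k, hk, rfl⟩
  rwa [hnoalg A hA] at hmem

lemma pstab_singleton_ne_top (hnoalg : NoAlgebraicity L M) (a : M) :
    pstab L M {a} ≠ ⊤ := by
  intro htop
  have hmem : a ∈ aclg L M (∅ : Set M) := by
    refine mem_aclg_of_orbit_subset (Set.finite_singleton a) fun g _ => ?_
    have hg : g ∈ pstab L M {a} := htop ▸ Subgroup.mem_top g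
    exact hg a rfl
  rwa [hnoalg ∅ Set.finite_empty] at hmem

lemma sstab_ne_top (hnoalg : NoAlgebraicity L M) {K : Set M} (hK : K.Finite)
    (hne : K.Nonempty) : sstab L M K ≠ ⊤ := by
  obtain ⟨k, hk⟩ := hne
  intro htop
  have hmem : k ∈ aclg L M (∅ : Set M) := by
    refine mem_aclg_of_orbit_subset hK fun g _ => ?_
    have hg : g ∈ sstab L M K := htop ▸ Subgroup.mem_top g
    rw [← mem_sstab.1 hg]; exact ⟨k, hk, rfl⟩
  rwa [hnoalg ∅ Set.finite_empty] at hmem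

lemma pstab_singleton_injective (hnoalg : NoAlgebraicity L M) {b b' : M}
    (h : pstab L M {b} = pstab L M {b'}) : b = b' := by
  have hsub : ({b'} : Set M) ⊆ {b} :=
    subset_of_sandwich hnoalg (Set.finite_singleton b) (Set.finite_singleton b') h.le
      (pstab_le_sstab _)
  exact (hsub rfl).symm

lemma isOpen_pstab (A : Set M) (hA : A.Finite) :
    IsOpen ((pstab L M A : Set (M ≃[L] M))) := by
  letI : TopologicalSpace M := ⊥
  haveI : DiscreteTopology M := ⟨rfl⟩
  have h1 : IsOpen {f : M → M | ∀ a ∈ A, f a = a} := by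
    have he : {f : M → M | ∀ a ∈ A, f a = a} = ⋂ a ∈ A, (fun f : M → M => f a) ⁻¹' {a} := by
      ext f; simp
    rw [he]
    exact hA.isOpen_biInter fun a _ =>
      (continuous_apply a).isOpen_preimage _ (isOpen_discrete _)
  exact h1.preimage continuous_induced_dom

lemma continuous_aut_mul_left (g : M ≃[L] M) :
    Continuous (fun x : M ≃[L] M => g * x) := by
  letI : TopologicalSpace M := ⊥
  haveI : DiscreteTopology M := ⟨rfl⟩
  apply continuous_induced_rng.2
  apply continuous_pi
  intro a
  show Continuous fun x : M ≃[L] M => g (x a)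
  exact continuous_of_discreteTopology.comp ((continuous_apply a).comp continuous_induced_dom)

lemma isOpen_subgroup_of_le {D H : Subgroup (M ≃[L] M)} (hD : IsOpen (D : Set (M ≃[L] M)))
    (hle : D ≤ H) : IsOpen (H : Set (M ≃[L] M)) := by
  have himg : ∀ h : M ≃[L] M,
      (fun x => h * x) '' (D : Set (M ≃[L] M)) = (fun x => h⁻¹ * x) ⁻¹' (D : Set _) := by
    intro h; ext y
    constructor
    · rintro ⟨x, hx, rfl⟩
      show h⁻¹ * (h * x) ∈ (D : Set _)
      rwa [← mul_assoc, inv_mul_cancel, one_mul]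
    · intro hy
      refine ⟨h⁻¹ * y, hy, ?_⟩
      show h * (h⁻¹ * y) = y
      rw [← mul_assoc, mul_inv_cancel, one_mul]
  have hU : (H : Set (M ≃[L] M)) = ⋃ h : ↥H, (fun x => (h : M ≃[L] M) * x) '' (D : Set _) := by
    ext y; simp only [Set.mem_iUnion]
    constructor
    · intro hy; exact ⟨⟨y, hy⟩, 1, D.one_mem, mul_one y⟩
    · rintro ⟨⟨h, hh⟩, x, hx, rfl⟩
      exact H.mul_mem hh (hle hx)
  rw [hU]
  exact isOpen_iUnion fun h => by
    rw [himg]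
    exact hD.preimage (continuous_aut_mul_left _)

lemma isOpen_sstab (K : Set M) (hK : K.Finite) :
    IsOpen ((sstab L M K : Set (M ≃[L] M))) :=
  isOpen_subgroup_of_le (isOpen_pstab K hK) (pstab_le_sstab K)

lemma coe_map_equiv (α : MulAut (M ≃[L] M)) (S : Subgroup (M ≃[L] M)) :
    (S.map α.toMonoidHom : Set (M ≃[L] M)) = ⇑α.symm ⁻¹' (S : Set (M ≃[L] M)) := by
  ext x
  simp only [SetLike.mem_coe, Subgroup.mem_map, Set.mem_preimage]
  constructor
  · rintro ⟨y, hy, rfl⟩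
    show α.symm (α y) ∈ S
    rwa [α.symm_apply_apply]
  · intro hx; exact ⟨α.symm x, hx, α.apply_symm_apply x⟩

lemma isOpen_map_equiv {α : MulAut (M ≃[L] M)} (hc : Continuous ⇑α.symm)
    {S : Subgroup (M ≃[L] M)} (hS : IsOpen (S : Set (M ≃[L] M))) :
    IsOpen ((S.map α.toMonoidHom : Set (M ≃[L] M))) := by
  rw [coe_map_equiv]; exact hS.preimage hc

lemma map_symm_map (α : MulAut (M ≃[L] M)) (S : Subgroup (M ≃[L] M)) :
    (S.map α.toMonoidHom).map α.symm.toMonoidHom = S := by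
  ext x
  simp only [Subgroup.mem_map]
  constructor
  · rintro ⟨y, ⟨z, hz, rfl⟩, rfl⟩
    show α.symm (α z) ∈ S
    rwa [α.symm_apply_apply]
  · intro hx; exact ⟨α x, ⟨x, hx, rfl⟩, α.symm_apply_apply x⟩

lemma map_map_symm (α : MulAut (M ≃[L] M)) (S : Subgroup (M ≃[L] M)) :
    (S.map α.symm.toMonoidHom).map α.toMonoidHom = S := by
  have h1 := map_symm_map α.symm S
  rwa [MulEquiv.symm_symm] at h1

lemma map_eq_top_iff (α : MulAut (M ≃[L] M)) {S : Subgroup (M ≃[L] M)}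
    (h : S.map α.toMonoidHom = ⊤) : S = ⊤ := by
  have h1 := congrArg (Subgroup.map α.symm.toMonoidHom) h
  rwa [map_symm_map, Subgroup.map_top_of_surjective _ α.symm.surjective] at h1

lemma pstab_singleton_max (h : HypH L M) (hnoalg : NoAlgebraicity L M) (a : M)
    {H' : Subgroup (M ≃[L] M)} (hopen : IsOpen (H' : Set (M ≃[L] M)))
    (hle : pstab L M {a} ≤ H') : H' = pstab L M {a} ∨ H' = ⊤ := by
  obtain ⟨K, ⟨hKf, -, hK1, hK2⟩, -⟩ := h.openSandwich H' hopen
  have hsub : K ⊆ {a} := subset_of_sandwich hnoalg (Set.finite_singleton a) hKf hle hK2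
  rcases Set.subset_singleton_iff_eq.1 hsub with h0 | h1
  · right
    rw [h0, pstab_empty] at hK1
    exact top_le_iff.1 hK1
  · left
    rw [h1, sstab_singleton] at hK2
    exact le_antisymm hK2 hle

lemma pstab_noFI (h : HypH L M) (hnoalg : NoAlgebraicity L M) (a : M)
    {D : Subgroup (M ≃[L] M)} (hDopen : IsOpen (D : Set (M ≃[L] M)))
    (hle : D ≤ pstab L M {a}) (S : Finset (M ≃[L] M))
    (hcov : ∀ x ∈ pstab L M {a}, ∃ g ∈ S, g⁻¹ * x ∈ D) :
    D = pstab L M {a} := by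
  obtain ⟨C, ⟨hCf, -, hC1, hC2⟩, -⟩ := h.openSandwich D hDopen
  have hCsub : C ⊆ {a} := by
    intro c hc
    have hmem : c ∈ aclg L M {a} := by
      refine mem_aclg_of_orbit_subset (C := ⋃ g ∈ S, (⇑g) '' C) ?_ ?_
      · exact S.finite_toSet.biUnion fun g _ => hCf.image _
      · intro x hx
        obtain ⟨g, hgS, hgd⟩ := hcov x hx
        have h1 : (g⁻¹ * x) c ∈ C := by
          rw [← mem_sstab.1 (hC2 hgd)]
          exact ⟨c, hc, rfl⟩
        have h2 : x c = g ((g⁻¹ * x) c) := by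
          rw [aut_mul_apply, aut_inv_apply, FirstOrder.Language.Equiv.apply_symm_apply]
        rw [h2]
        exact Set.mem_biUnion hgS ⟨_, h1, rfl⟩
    rwa [hnoalg {a} (Set.finite_singleton a)] at hmem
  rcases Set.subset_singleton_iff_eq.1 hCsub with h0 | h1
  · exfalso
    rw [h0, pstab_empty] at hC1
    have htop : pstab L M {a} = ⊤ := top_le_iff.1 (le_trans hC1 hle)
    exact pstab_singleton_ne_top hnoalg a htop
  · rw [h1] at hC1
    exact le_antisymm hle hC1

lemma exists_cover_sstab (K : Set M) (hK : K.Finite) :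
    ∃ S : Finset (M ≃[L] M), ∀ x ∈ sstab L M K, ∃ g ∈ S, g⁻¹ * x ∈ pstab L M K := by
  classical
  haveI : Finite ↥K := hK.to_subtype
  set ρ : (M ≃[L] M) → (↥K → M) := fun g k => g k with hρdef
  have hTfin : (ρ '' (sstab L M K : Set (M ≃[L] M))).Finite := by
    refine Set.Finite.subset (Set.Finite.pi fun _ : ↥K => hK) ?_
    rintro f ⟨g, hg, rfl⟩
    rw [Set.mem_univ_pi]
    intro k
    have hmem : g (k : M) ∈ (⇑g) '' K := ⟨k, k.2, rfl⟩
    rwa [mem_sstab.1 hg] at hmem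
  have hchoice : ∀ t : ↥(ρ '' (sstab L M K : Set (M ≃[L] M))),
      ∃ g, g ∈ sstab L M K ∧ ρ g = (t : ↥K → M) := by
    rintro ⟨t, g, hg, rfl⟩; exact ⟨g, hg, rfl⟩
  choose w hw1 hw2 using hchoice
  haveI : Finite ↥(ρ '' (sstab L M K : Set (M ≃[L] M))) := hTfin.to_subtype
  refine ⟨(Set.finite_range w).toFinset, ?_⟩
  intro x hx
  have hxT : ρ x ∈ ρ '' (sstab L M K : Set (M ≃[L] M)) := ⟨x, hx, rfl⟩
  refine ⟨w ⟨ρ x, hxT⟩, (Set.finite_range w).mem_toFinset.2 ⟨_, rfl⟩, ?_⟩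
  intro c hc
  have hagree : w ⟨ρ x, hxT⟩ c = x c := congrFun (hw2 ⟨ρ x, hxT⟩) ⟨c, hc⟩
  rw [aut_mul_apply, aut_inv_apply, ← hagree, FirstOrder.Language.Equiv.symm_apply_apply]

lemma map_conj_pstab (g : M ≃[L] M) (a : M) :
    (pstab L M {a}).map (MulAut.conj g).toMonoidHom = pstab L M {g a} := by
  ext x
  simp only [Subgroup.mem_map]
  constructor
  · rintro ⟨y, hy, rfl⟩
    intro c hc
    rw [Set.mem_singleton_iff] at hc; subst hc
    show (MulAut.conj g) y (g a) = g a
    rw [MulAut.conj_apply, aut_mul_apply, aut_mul_apply, aut_inv_apply,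
      FirstOrder.Language.Equiv.symm_apply_apply, hy a rfl]
  · intro hx
    refine ⟨g⁻¹ * x * g, ?_, ?_⟩
    · intro c hc
      rw [Set.mem_singleton_iff] at hc; subst hc
      rw [aut_mul_apply, aut_mul_apply, hx (g c) rfl, aut_inv_apply,
        FirstOrder.Language.Equiv.symm_apply_apply]
    · show g * (g⁻¹ * x * g) * g⁻¹ = x
      group

lemma map_comm_conj (α : MulAut (M ≃[L] M)) (g : M ≃[L] M) (S : Subgroup (M ≃[L] M)) :
    (S.map (MulAut.conj g).toMonoidHom).map α.toMonoidHom
      = (S.map α.toMonoidHom).map (MulAut.conj (α g)).toMonoidHom := by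
  rw [Subgroup.map_map, Subgroup.map_map]
  congr 1
  ext x
  simp [MulAut.conj_apply, map_mul, map_inv]

end Statement19Aux


section Statement19Main

variable {L : FirstOrder.Language} {M : Type*} [L.Structure M]

/-- Every automorphism of `M` gives a class-preserving automorphism of the orbital structure. -/
lemma range_toPerm_subset_fix :
    Set.range (toPerm L M) ⊆ (autOrbitalFix L M : Set (Equiv.Perm M)) := by
  rintro _ ⟨g, rfl⟩
  refine mem_autOrbitalFix.2 ⟨mem_autOrbital.2 fun n x y => ?_, fun n x => ⟨g, fun i => rfl⟩⟩
  constructor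
  · rintro ⟨k, hk⟩
    refine ⟨g * k * g⁻¹, fun i => ?_⟩
    show (g * k * g⁻¹) (g (x i)) = g (y i)
    rw [aut_mul_apply, aut_mul_apply, aut_inv_apply,
      FirstOrder.Language.Equiv.symm_apply_apply, hk i]
  · rintro ⟨k, hk⟩
    refine ⟨g⁻¹ * k * g, fun i => ?_⟩
    have h5 : k (g (x i)) = g (y i) := hk i
    show (g⁻¹ * k * g) (x i) = y i
    rw [aut_mul_apply, aut_mul_apply, h5, aut_inv_apply,
      FirstOrder.Language.Equiv.symm_apply_apply]

/-- Every class-preserving automorphism of the orbital structure comes from an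
automorphism of `M`. -/
lemma fix_subset_range :
    (autOrbitalFix L M : Set (Equiv.Perm M)) ⊆ Set.range (toPerm L M) := by
  intro f hf
  obtain ⟨hf1, hf2⟩ := mem_autOrbitalFix.1 hf
  have hwit : ∀ (n : ℕ) (x : Fin n → M), ∃ g : M ≃[L] M, ∀ i, g (x i) = f (x i) := by
    intro n x
    obtain ⟨g, hg⟩ := hf2 n x
    exact ⟨g, fun i => hg i⟩
  refine ⟨⟨f, ?_, ?_⟩, rfl⟩
  · intro n φ x
    obtain ⟨g, hg⟩ := hwit (n + 1) (Fin.snoc x (FirstOrder.Language.Structure.funMap φ x))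
    have h1 : ∀ i : Fin n, g (x i) = f (x i) := fun i => by
      have h2 := hg i.castSucc
      rwa [Fin.snoc_castSucc] at h2
    have h2 : g (FirstOrder.Language.Structure.funMap φ x)
        = f (FirstOrder.Language.Structure.funMap φ x) := by
      have h3 := hg (Fin.last n)
      rwa [Fin.snoc_last] at h3
    show f (FirstOrder.Language.Structure.funMap φ x)
        = FirstOrder.Language.Structure.funMap φ (⇑f ∘ x)
    calc f (FirstOrder.Language.Structure.funMap φ x)
        = g (FirstOrder.Language.Structure.funMap φ x) := h2.symm
      _ = FirstOrder.Language.Structure.funMap φ (⇑g ∘ x) := g.map_fun φ x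
      _ = FirstOrder.Language.Structure.funMap φ (⇑f ∘ x) := by
          congr 1
          funext i
          exact h1 i
  · intro n r x
    obtain ⟨g, hg⟩ := hwit n x
    show FirstOrder.Language.Structure.RelMap r (⇑f ∘ x)
        ↔ FirstOrder.Language.Structure.RelMap r x
    have hgx : ⇑f ∘ x = ⇑g ∘ x := by
      funext i
      exact (hg i).symm
    rw [hgx]
    exact g.map_rel r x

lemma fix_conj_mem {p q : Equiv.Perm M} (hq : q ∈ autOrbital L M)
    (hp : p ∈ autOrbitalFix L M) : q * p * q⁻¹ ∈ autOrbitalFix L M := by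
  obtain ⟨hp1, hp2⟩ := mem_autOrbitalFix.1 hp
  refine mem_autOrbitalFix.2 ⟨(autOrbital L M).mul_mem ((autOrbital L M).mul_mem hq hp1)
    ((autOrbital L M).inv_mem hq), fun n x => ?_⟩
  have hx : orbRel L M n (⇑q⁻¹ ∘ x) (⇑p ∘ (⇑q⁻¹ ∘ x)) := hp2 n _
  have h1 := (mem_autOrbital.1 hq n _ _).1 hx
  have hqq : ⇑q ∘ (⇑q⁻¹ ∘ x) = x := by funext i; simp
  rw [hqq] at h1
  exact h1

lemma fix_normal : ((autOrbitalFix L M).subgroupOf (autOrbital L M)).Normal := by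
  constructor
  intro p hp q
  rw [Subgroup.mem_subgroupOf] at hp ⊢
  exact fix_conj_mem q.2 hp

lemma conj_mem_range_toPerm (θ : ↥(autOrbital L M)) (g : M ≃[L] M) :
    ∃ g' : M ≃[L] M, toPerm L M g' = ↑θ * toPerm L M g * (↑θ)⁻¹ := by
  have h1 : toPerm L M g ∈ autOrbitalFix L M := range_toPerm_subset_fix ⟨g, rfl⟩
  have h2 := fix_conj_mem θ.2 h1
  have h3 := fix_subset_range h2
  obtain ⟨g', hg'⟩ := h3
  exact ⟨g', hg'⟩

noncomputable def psiFun (θ : ↥(autOrbital L M)) (g : M ≃[L] M) : M ≃[L] M :=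
  Classical.choose (conj_mem_range_toPerm θ g)

lemma psiFun_spec (θ : ↥(autOrbital L M)) (g : M ≃[L] M) :
    toPerm L M (psiFun θ g) = ↑θ * toPerm L M g * (↑θ)⁻¹ :=
  Classical.choose_spec (conj_mem_range_toPerm θ g)

lemma psiFun_apply (θ : ↥(autOrbital L M)) (g : M ≃[L] M) (m : M) :
    psiFun θ g m = (θ : Equiv.Perm M) (g (((θ : Equiv.Perm M))⁻¹ m)) :=
  congrArg (fun p : Equiv.Perm M => p m) (psiFun_spec θ g)

lemma psiFun_mul (θ : ↥(autOrbital L M)) (g g' : M ≃[L] M) :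
    psiFun θ (g * g') = psiFun θ g * psiFun θ g' := by
  apply toPerm_injective
  rw [map_mul, psiFun_spec, psiFun_spec, psiFun_spec, map_mul]
  group

lemma psiFun_leftinv (θ : ↥(autOrbital L M)) (g : M ≃[L] M) :
    psiFun θ⁻¹ (psiFun θ g) = g := by
  apply toPerm_injective
  rw [psiFun_spec, psiFun_spec]
  have hco : ((θ⁻¹ : ↥(autOrbital L M)) : Equiv.Perm M) = ((θ : Equiv.Perm M))⁻¹ := rfl
  rw [hco]
  group

noncomputable def PsiAut (θ : ↥(autOrbital L M)) : MulAut (M ≃[L] M) where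
  toFun := psiFun θ
  invFun := psiFun θ⁻¹
  left_inv g := psiFun_leftinv θ g
  right_inv g := by
    have h1 := psiFun_leftinv θ⁻¹ g
    rwa [inv_inv] at h1
  map_mul' := psiFun_mul θ

lemma continuous_psiFun (θ : ↥(autOrbital L M)) :
    Continuous (fun g : M ≃[L] M => psiFun θ g) := by
  letI : TopologicalSpace M := ⊥
  haveI : DiscreteTopology M := ⟨rfl⟩
  apply continuous_induced_rng.2
  apply continuous_pi
  intro a
  show Continuous fun g : M ≃[L] M => psiFun θ g a
  have hrw : (fun g : M ≃[L] M => psiFun θ g a)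
      = fun g : M ≃[L] M => (θ : Equiv.Perm M) (g (((θ : Equiv.Perm M))⁻¹ a)) := by
    funext g
    exact psiFun_apply θ g a
  rw [hrw]
  exact continuous_of_discreteTopology.comp ((continuous_apply _).comp continuous_induced_dom)

lemma PsiAut_mem_topMulAut (θ : ↥(autOrbital L M)) :
    PsiAut θ ∈ topMulAut (M ≃[L] M) := by
  constructor
  · exact continuous_psiFun θ
  · show Continuous (fun g : M ≃[L] M => psiFun θ⁻¹ g)
    exact continuous_psiFun θ⁻¹

noncomputable def PsiSub (θ : ↥(autOrbital L M)) : ↥(topMulAut (M ≃[L] M)) :=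
  ⟨PsiAut θ, PsiAut_mem_topMulAut θ⟩

lemma topMulAut_cont (α : ↥(topMulAut (M ≃[L] M))) :
    Continuous ⇑(α : MulAut (M ≃[L] M)) := α.2.1

lemma topMulAut_cont_symm (α : ↥(topMulAut (M ≃[L] M))) :
    Continuous ⇑(α : MulAut (M ≃[L] M)).symm := α.2.2

variable (h : HypH L M) (hnoalg : NoAlgebraicity L M)

include h hnoalg in
lemma exists_point (α : MulAut (M ≃[L] M)) (hc : Continuous ⇑α) (hc' : Continuous ⇑α.symm)
    (a : M) : ∃ b, (pstab L M {a}).map α.toMonoidHom = pstab L M {b} := by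
  classical
  have hsymm2 : Continuous ⇑α.symm.symm := by rw [MulEquiv.symm_symm]; exact hc
  set H := (pstab L M {a}).map α.toMonoidHom with hH
  have hHopen : IsOpen (H : Set (M ≃[L] M)) :=
    isOpen_map_equiv hc' (isOpen_pstab _ (Set.finite_singleton a))
  obtain ⟨K, ⟨hKf, -, hK1, hK2⟩, -⟩ := h.openSandwich H hHopen
  have hHne : H ≠ ⊤ := by
    intro htop
    exact pstab_singleton_ne_top hnoalg a (map_eq_top_iff α htop)
  have hKne : K.Nonempty := by
    rcases K.eq_empty_or_nonempty with h0 | h1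
    · exfalso; apply hHne; rw [h0, pstab_empty] at hK1; exact top_le_iff.1 hK1
    · exact h1
  have hmax : ∀ H'' : Subgroup (M ≃[L] M), IsOpen (H'' : Set (M ≃[L] M)) → H ≤ H'' →
      H'' = H ∨ H'' = ⊤ := by
    intro H'' ho hle
    have h1 : pstab L M {a} ≤ H''.map α.symm.toMonoidHom := by
      have h2 := Subgroup.map_mono (f := α.symm.toMonoidHom) hle
      rwa [hH, map_symm_map] at h2
    rcases pstab_singleton_max h hnoalg a (isOpen_map_equiv hsymm2 ho) h1 with he | he
    · left
      have h3 := congrArg (Subgroup.map α.toMonoidHom) he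
      rwa [map_map_symm, ← hH] at h3
    · right
      have h3 := congrArg (Subgroup.map α.toMonoidHom) he
      rwa [map_map_symm, Subgroup.map_top_of_surjective _ α.surjective] at h3
  have hsseq : H = sstab L M K := by
    rcases hmax (sstab L M K) (isOpen_sstab K hKf) hK2 with he | he
    · exact he.symm
    · exact absurd he (sstab_ne_top hnoalg hKf hKne)
  have hps : pstab L M K = H := by
    obtain ⟨S, hS⟩ := exists_cover_sstab (L := L) K hKf
    set D' := (pstab L M K).map α.symm.toMonoidHom with hD'
    have hD'le : D' ≤ pstab L M {a} := by
      have h2 := Subgroup.map_mono (f := α.symm.toMonoidHom) hK1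
      rwa [hH, map_symm_map] at h2
    have hD'open : IsOpen (D' : Set (M ≃[L] M)) :=
      isOpen_map_equiv hsymm2 (isOpen_pstab K hKf)
    have hcov : ∀ x ∈ pstab L M {a}, ∃ g ∈ S.image ⇑α.symm, g⁻¹ * x ∈ D' := by
      intro x hx
      have hxH : α x ∈ sstab L M K := by
        rw [← hsseq]
        exact ⟨x, hx, rfl⟩
      obtain ⟨g, hgS, hgd⟩ := hS (α x) hxH
      refine ⟨α.symm g, Finset.mem_image_of_mem _ hgS, ⟨g⁻¹ * α x, hgd, ?_⟩⟩
      rw [map_mul, map_inv]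
      show (α.symm g)⁻¹ * α.symm (α x) = (α.symm g)⁻¹ * x
      rw [α.symm_apply_apply]
    have hDeq := pstab_noFI h hnoalg a hD'open hD'le _ hcov
    have h3 := congrArg (Subgroup.map α.toMonoidHom) hDeq
    rwa [hD', map_map_symm, ← hH] at h3
  obtain ⟨b, hb⟩ := hKne
  refine ⟨b, ?_⟩
  have h1 : H ≤ pstab L M {b} := by
    rw [← hps]
    intro g hg c hc
    rw [Set.mem_singleton_iff] at hc; subst hc
    exact hg _ hb
  rcases hmax (pstab L M {b}) (isOpen_pstab _ (Set.finite_singleton b)) h1 with he | he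
  · exact he.symm
  · exact absurd he (pstab_singleton_ne_top hnoalg b)

noncomputable def fPoint (α : ↥(topMulAut (M ≃[L] M))) (a : M) : M :=
  Classical.choose
    (exists_point h hnoalg (α : MulAut (M ≃[L] M)) (topMulAut_cont α) (topMulAut_cont_symm α) a)

lemma fPoint_spec (α : ↥(topMulAut (M ≃[L] M))) (a : M) :
    (pstab L M {a}).map ((α : MulAut (M ≃[L] M))).toMonoidHom
      = pstab L M {fPoint h hnoalg α a} :=
  Classical.choose_spec
    (exists_point h hnoalg (α : MulAut (M ≃[L] M)) (topMulAut_cont α) (topMulAut_cont_symm α) a)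

lemma fPoint_unique (α : ↥(topMulAut (M ≃[L] M))) {a b : M}
    (hb : (pstab L M {a}).map ((α : MulAut (M ≃[L] M))).toMonoidHom = pstab L M {b}) :
    fPoint h hnoalg α a = b :=
  pstab_singleton_injective hnoalg (by rw [← fPoint_spec h hnoalg α a, hb])

lemma fPoint_mul (α β : ↥(topMulAut (M ≃[L] M))) (a : M) :
    fPoint h hnoalg (α * β) a = fPoint h hnoalg α (fPoint h hnoalg β a) := by
  apply fPoint_unique
  have hcomp : ((α * β : ↥(topMulAut (M ≃[L] M))) : MulAut (M ≃[L] M)).toMonoidHom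
      = ((α : MulAut (M ≃[L] M)).toMonoidHom).comp ((β : MulAut (M ≃[L] M)).toMonoidHom) := by
    ext x; rfl
  rw [hcomp, ← Subgroup.map_map, fPoint_spec h hnoalg β a, fPoint_spec h hnoalg α _]

lemma fPoint_inv_left (α : ↥(topMulAut (M ≃[L] M))) (a : M) :
    fPoint h hnoalg α⁻¹ (fPoint h hnoalg α a) = a := by
  apply fPoint_unique
  have hco : ((α⁻¹ : ↥(topMulAut (M ≃[L] M))) : MulAut (M ≃[L] M)).toMonoidHom
      = ((α : MulAut (M ≃[L] M)).symm).toMonoidHom := rfl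
  rw [← fPoint_spec h hnoalg α a, hco, map_symm_map]

lemma fPoint_conj (α : ↥(topMulAut (M ≃[L] M))) (g : M ≃[L] M) (a : M) :
    fPoint h hnoalg α (g a) = ((α : MulAut (M ≃[L] M)) g) (fPoint h hnoalg α a) := by
  apply fPoint_unique
  rw [← map_conj_pstab g a, map_comm_conj, fPoint_spec h hnoalg α a, map_conj_pstab]

noncomputable def theta (α : ↥(topMulAut (M ≃[L] M))) : Equiv.Perm M where
  toFun := fPoint h hnoalg α
  invFun := fPoint h hnoalg α⁻¹
  left_inv a := fPoint_inv_left h hnoalg α a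
  right_inv a := by
    have h1 := fPoint_inv_left h hnoalg α⁻¹ a
    rwa [inv_inv] at h1

lemma theta_mul (α β : ↥(topMulAut (M ≃[L] M))) :
    theta h hnoalg (α * β) = theta h hnoalg α * theta h hnoalg β :=
  Equiv.ext fun a => fPoint_mul h hnoalg α β a

lemma theta_mem (α : ↥(topMulAut (M ≃[L] M))) : theta h hnoalg α ∈ autOrbital L M := by
  refine mem_autOrbital.2 fun n x y => ⟨?_, ?_⟩
  · rintro ⟨g, hg⟩
    refine ⟨(α : MulAut (M ≃[L] M)) g, fun i => ?_⟩
    show ((α : MulAut (M ≃[L] M)) g) (fPoint h hnoalg α (x i)) = fPoint h hnoalg α (y i)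
    rw [← fPoint_conj, hg i]
  · rintro ⟨g, hg⟩
    refine ⟨(α : MulAut (M ≃[L] M)).symm g, fun i => ?_⟩
    have hgi : g (fPoint h hnoalg α (x i)) = fPoint h hnoalg α (y i) := hg i
    have h2 : fPoint h hnoalg α (((α : MulAut (M ≃[L] M)).symm g) (x i))
        = g (fPoint h hnoalg α (x i)) := by
      rw [fPoint_conj h hnoalg α, MulEquiv.apply_symm_apply]
    have h3 : fPoint h hnoalg α (((α : MulAut (M ≃[L] M)).symm g) (x i))
        = fPoint h hnoalg α (y i) := by rw [h2]; exact hgi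
    have h4 := congrArg (fPoint h hnoalg α⁻¹) h3
    rwa [fPoint_inv_left, fPoint_inv_left] at h4

lemma theta_PsiSub (θ : ↥(autOrbital L M)) :
    theta h hnoalg (PsiSub θ) = (θ : Equiv.Perm M) := by
  apply Equiv.ext
  intro a
  show fPoint h hnoalg (PsiSub θ) a = (θ : Equiv.Perm M) a
  apply fPoint_unique
  ext x
  simp only [Subgroup.mem_map]
  constructor
  · rintro ⟨y, hy, rfl⟩
    intro c hc
    rw [Set.mem_singleton_iff] at hc; subst hc
    show psiFun θ y ((θ : Equiv.Perm M) a) = (θ : Equiv.Perm M) a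
    rw [psiFun_apply, Equiv.Perm.inv_def, Equiv.symm_apply_apply, hy a rfl]
  · intro hx
    refine ⟨psiFun θ⁻¹ x, ?_, ?_⟩
    · intro c hc
      rw [Set.mem_singleton_iff] at hc; subst hc
      rw [psiFun_apply]
      have hco : ((θ⁻¹ : ↥(autOrbital L M)) : Equiv.Perm M) = ((θ : Equiv.Perm M))⁻¹ := rfl
      rw [hco, inv_inv, hx _ rfl]
      exact (θ : Equiv.Perm M).symm_apply_apply _
    · show psiFun θ (psiFun θ⁻¹ x) = x
      have h1 := psiFun_leftinv θ⁻¹ x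
      rwa [inv_inv] at h1

lemma PsiSub_theta (α : ↥(topMulAut (M ≃[L] M))) :
    PsiSub ⟨theta h hnoalg α, theta_mem h hnoalg α⟩ = α := by
  apply Subtype.ext
  apply MulEquiv.ext
  intro g
  show psiFun ⟨theta h hnoalg α, theta_mem h hnoalg α⟩ g = (α : MulAut (M ≃[L] M)) g
  apply toPerm_injective
  show toPerm L M (psiFun ⟨theta h hnoalg α, theta_mem h hnoalg α⟩ g)
    = toPerm L M ((α : MulAut (M ≃[L] M)) g)
  rw [psiFun_spec]
  apply Equiv.ext
  intro m
  show (theta h hnoalg α) (g (((theta h hnoalg α)⁻¹ : Equiv.Perm M) m))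
    = ((α : MulAut (M ≃[L] M)) g) m
  rw [show (theta h hnoalg α) (g (((theta h hnoalg α)⁻¹ : Equiv.Perm M) m))
      = ((α : MulAut (M ≃[L] M)) g) ((theta h hnoalg α) (((theta h hnoalg α)⁻¹ : Equiv.Perm M) m))
      from fPoint_conj h hnoalg α g _,
    Equiv.Perm.inv_def, Equiv.apply_symm_apply]

noncomputable def eIso : ↥(topMulAut (M ≃[L] M)) ≃* ↥(autOrbital L M) where
  toFun α := ⟨theta h hnoalg α, theta_mem h hnoalg α⟩
  invFun := PsiSub
  left_inv α := PsiSub_theta h hnoalg α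
  right_inv θ := Subtype.ext (theta_PsiSub h hnoalg θ)
  map_mul' α β := Subtype.ext (theta_mul h hnoalg α β)

end Statement19Main


/-- For `M` satisfying Hypothesis (H) with no algebraicity:
(1) `Aut°(E_M) = Aut(M)`; (2) `Aut°(E_M) ⊴ Aut(E_M)`; (3) there is a group isomorphism
between the topological automorphism group of `Aut(M)` and `Aut(E_M)` sending the inner
automorphisms exactly onto `Aut°(E_M)`; (4) `Out(Aut(M)) ≅ Aut(E_M)/Aut°(E_M)`. -/
theorem stmt_19 (L : FirstOrder.Language) (M : Type*) [L.Structure M]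
    (h : HypH L M) (hnoalg : NoAlgebraicity L M) :
    ((autOrbitalFix L M : Set (Equiv.Perm M)) = Set.range (toPerm L M)) ∧
    ((autOrbitalFix L M).subgroupOf (autOrbital L M)).Normal ∧
    (∃ e : ↥(topMulAut (M ≃[L] M)) ≃* ↥(autOrbital L M),
      ∀ α : ↥(topMulAut (M ≃[L] M)),
        ((α : MulAut (M ≃[L] M)) ∈
            (MulAut.conj : (M ≃[L] M) →* MulAut (M ≃[L] M)).range ↔
          ((e α : Equiv.Perm M) ∈ autOrbitalFix L M))) ∧
    (∃ (Q : Type _) (_ : Group Q) (q₁ : ↥(topMulAut (M ≃[L] M)) →* Q)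
        (q₂ : ↥(autOrbital L M) →* Q),
      Function.Surjective q₁ ∧ Function.Surjective q₂ ∧
      q₁.ker = ((MulAut.conj : (M ≃[L] M) →* MulAut (M ≃[L] M)).range).subgroupOf
        (topMulAut (M ≃[L] M)) ∧
      q₂.ker = (autOrbitalFix L M).subgroupOf (autOrbital L M)) := by
  classical
  have part1 : (autOrbitalFix L M : Set (Equiv.Perm M)) = Set.range (toPerm L M) :=
    Set.Subset.antisymm fix_subset_range range_toPerm_subset_fix
  have part2 : ((autOrbitalFix L M).subgroupOf (autOrbital L M)).Normal := fix_normal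
  let e : ↥(topMulAut (M ≃[L] M)) ≃* ↥(autOrbital L M) := eIso h hnoalg
  have hiff : ∀ α : ↥(topMulAut (M ≃[L] M)),
      ((α : MulAut (M ≃[L] M)) ∈
          (MulAut.conj : (M ≃[L] M) →* MulAut (M ≃[L] M)).range ↔
        ((e α : Equiv.Perm M) ∈ autOrbitalFix L M)) := by
    intro α
    constructor
    · rintro ⟨k, hk⟩
      have htheta : theta h hnoalg α = toPerm L M k := by
        apply Equiv.ext
        intro a
        show fPoint h hnoalg α a = toPerm L M k a
        refine fPoint_unique h hnoalg α ?_
        rw [← hk]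
        exact map_conj_pstab k a
      have hcoe : (e α : Equiv.Perm M) = toPerm L M k := htheta
      rw [hcoe]
      exact range_toPerm_subset_fix ⟨k, rfl⟩
    · intro hfix
      obtain ⟨k, hk⟩ := fix_subset_range hfix
      refine ⟨k, ?_⟩
      have hPsi := PsiSub_theta h hnoalg α
      have hcoe : (α : MulAut (M ≃[L] M))
          = PsiAut ⟨theta h hnoalg α, theta_mem h hnoalg α⟩ :=
        (congrArg Subtype.val hPsi).symm
      rw [hcoe]
      apply MulEquiv.ext
      intro g
      show MulAut.conj k g = psiFun ⟨theta h hnoalg α, theta_mem h hnoalg α⟩ g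
      apply toPerm_injective
      have hco : ((⟨theta h hnoalg α, theta_mem h hnoalg α⟩ : ↥(autOrbital L M)) :
          Equiv.Perm M) = toPerm L M k := hk.symm
      rw [psiFun_spec, hco, MulAut.conj_apply, map_mul, map_mul, map_inv]
  refine ⟨part1, part2, ⟨e, hiff⟩, ?_⟩
  haveI := part2
  haveI : Countable M := h.countable
  haveI hs2 : Small.{0} (Equiv.Perm M) :=
    small_of_injective (f := fun p : Equiv.Perm M => (p : M → M))
      (fun p q hpq => Equiv.coe_fn_injective hpq)
  haveI hs3 : Small.{0} ↥(autOrbital L M) := small_of_injective Subtype.val_injective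
  haveI hs4 : Small.{0}
      ((↥(autOrbital L M)) ⧸ ((autOrbitalFix L M).subgroupOf (autOrbital L M))) :=
    small_of_surjective (QuotientGroup.mk'_surjective _)
  haveI hs5 := small_lift
      ((↥(autOrbital L M)) ⧸ ((autOrbitalFix L M).subgroupOf (autOrbital L M)))
  have hker2 : ((Shrink.mulEquiv
        (α := (↥(autOrbital L M)) ⧸ ((autOrbitalFix L M).subgroupOf (autOrbital L M)))).symm.toMonoidHom.comp
        (QuotientGroup.mk' ((autOrbitalFix L M).subgroupOf (autOrbital L M)))).ker
      = (autOrbitalFix L M).subgroupOf (autOrbital L M) := by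
    ext θ
    rw [MonoidHom.mem_ker, MonoidHom.comp_apply]
    show (Shrink.mulEquiv).symm ((QuotientGroup.mk' _) θ) = 1 ↔ _
    rw [MulEquiv.map_eq_one_iff, ← MonoidHom.mem_ker, QuotientGroup.ker_mk']
  refine ⟨Shrink ((↥(autOrbital L M)) ⧸ ((autOrbitalFix L M).subgroupOf (autOrbital L M))),
    inferInstance,
    ((Shrink.mulEquiv).symm.toMonoidHom.comp
      (QuotientGroup.mk' ((autOrbitalFix L M).subgroupOf (autOrbital L M)))).comp e.toMonoidHom,
    (Shrink.mulEquiv).symm.toMonoidHom.comp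
      (QuotientGroup.mk' ((autOrbitalFix L M).subgroupOf (autOrbital L M))),
    ?_, ?_, ?_, hker2⟩
  · exact (((Shrink.mulEquiv).symm.surjective.comp
      (QuotientGroup.mk'_surjective _)).comp e.surjective)
  · exact (Shrink.mulEquiv).symm.surjective.comp (QuotientGroup.mk'_surjective _)
  · ext α
    rw [MonoidHom.mem_ker, MonoidHom.comp_apply, ← MonoidHom.mem_ker, hker2,
      Subgroup.mem_subgroupOf, Subgroup.mem_subgroupOf]
    exact (hiff α).symm

end Paper
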